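/- In the symmetrized sum Σ_{σ∈S_4} σ[ (z_1-q^{-1}w)(z_2-q^{-1}w)(z_3-q^{-1}w)(z_4-q^{-1}w) + [4]_2 (w-q^{-1}z_1)(z_2-q^{-1}w)(z_3-q^{-1}w)(z_4-q^{-1}w) + [4 choose 2]_2 (w-q^{-1}z_1)(w-q^{-1}z_2)(z_3-q^{-1}w)(z_4-q^{-1}w) + [4]_2 (w-q^{-1}z_1)(w-q^{-1}z_2)(w-q^{-1}z_3)(z_4-q^{-1}w) + (w-q^{-1}z_1)(w-q^{-1}z_2)(w-q^{-1}z_3)(w-q^{-1}z_4) ], the coefficients of w^0 and w^4 both vanish. -/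

import Mathlib

noncomputable section

/-- The field ℚ(q^{1/3}) of rational functions in the indeterminate q₂ = q^{1/3}. -/
abbrev Kq : Type := RatFunc ℚ

/-- The indeterminate q₂ = q^{1/3}, so that q = q₂³. -/
def q2 : Kq := RatFunc.X

/-- The q₂-integer [n]₂ = (q₂ⁿ - q₂⁻ⁿ)/(q₂ - q₂⁻¹). -/
def qInt2 (n : ℤ) : Kq := (q2 ^ n - q2 ^ (-n)) / (q2 - q2⁻¹)

/-- The polynomial ring ℚ(q^{1/3})[z₁,z₂,z₃,z₄][w]. -/
abbrev Rz : Type := Polynomial (MvPolynomial (Fin 4) Kq)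

/-- Inclusion of scalars. -/
def cK (a : Kq) : Rz := Polynomial.C (MvPolynomial.C a)

/-- The variable w. -/
def w : Rz := Polynomial.X

/-- The variables z₁,…,z₄ (indexed by 0,…,3). -/
def z (i : Fin 4) : Rz := Polynomial.C (MvPolynomial.X i)

/-- The scalar q⁻¹ = q₂⁻³. -/
def qinv : Rz := cK (q2 ^ (-3 : ℤ))

/-- The action of σ ∈ S₄ permuting z₁,…,z₄. -/
def permAct (σ : Equiv.Perm (Fin 4)) (p : Rz) : Rz :=
  Polynomial.map (MvPolynomial.rename σ).toRingHom p

/-- The five-term Serre summand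
(z₁-q⁻¹w)(z₂-q⁻¹w)(z₃-q⁻¹w)(z₄-q⁻¹w) + [4]₂ (w-q⁻¹z₁)(z₂-q⁻¹w)(z₃-q⁻¹w)(z₄-q⁻¹w)
 + ([4]₂[3]₂/[2]₂) (w-q⁻¹z₁)(w-q⁻¹z₂)(z₃-q⁻¹w)(z₄-q⁻¹w)
 + [4]₂ (w-q⁻¹z₁)(w-q⁻¹z₂)(w-q⁻¹z₃)(z₄-q⁻¹w) + (w-q⁻¹z₁)(w-q⁻¹z₂)(w-q⁻¹z₃)(w-q⁻¹z₄). -/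
def serreTerm : Rz :=
  (z 0 - qinv * w) * (z 1 - qinv * w) * (z 2 - qinv * w) * (z 3 - qinv * w)
  + cK (qInt2 4) *
      ((w - qinv * z 0) * (z 1 - qinv * w) * (z 2 - qinv * w) * (z 3 - qinv * w))
  + cK (qInt2 4 * qInt2 3 / qInt2 2) *
      ((w - qinv * z 0) * (w - qinv * z 1) * (z 2 - qinv * w) * (z 3 - qinv * w))
  + cK (qInt2 4) *
      ((w - qinv * z 0) * (w - qinv * z 1) * (w - qinv * z 2) * (z 3 - qinv * w))
  + (w - qinv * z 0) * (w - qinv * z 1) * (w - qinv * z 2) * (w - qinv * z 3)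

/-! ### Auxiliary scalar lemmas -/

lemma q2_ne : q2 ≠ 0 := RatFunc.X_ne_zero

lemma q2sub_ne : q2 - q2⁻¹ ≠ 0 := by
  intro h
  have h2 : q2 * q2 - 1 = 0 := by
    have := congrArg (· * q2) h
    field_simp [q2_ne] at this
    linear_combination this
  have hp : (Polynomial.X * Polynomial.X - 1 : Polynomial ℚ) ≠ 0 := by
    intro hp
    have := congrArg (fun p => Polynomial.coeff p 2) hp
    simp [Polynomial.coeff_one] at this
  have hne : (RatFunc.X * RatFunc.X - 1 : Kq) ≠ 0 := by
    rw [show (RatFunc.X * RatFunc.X - 1 : Kq)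
        = algebraMap (Polynomial ℚ) Kq (Polynomial.X * Polynomial.X - 1) by
      push_cast [map_sub, map_mul, map_one, RatFunc.algebraMap_X]; ring]
    exact fun hc => hp ((map_eq_zero_iff _ (IsFractionRing.injective (Polynomial ℚ) Kq)).mp hc)
  exact hne h2

lemma qInt2_two : qInt2 2 = q2 + q2⁻¹ := by
  rw [qInt2, div_eq_iff q2sub_ne]
  simp only [show (2:ℤ) = ((2:ℕ):ℤ) from rfl, zpow_neg, zpow_natCast, ← inv_pow]
  ring

lemma qInt2_three : qInt2 3 = q2^2 + 1 + q2⁻¹^2 := by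
  rw [qInt2, div_eq_iff q2sub_ne]
  simp only [show (3:ℤ) = ((3:ℕ):ℤ) from rfl, zpow_neg, zpow_natCast, ← inv_pow]
  have hne := q2_ne
  field_simp
  ring

lemma qInt2_four : qInt2 4 = q2^3 + q2 + q2⁻¹ + q2⁻¹^3 := by
  rw [qInt2, div_eq_iff q2sub_ne]
  simp only [show (4:ℤ) = ((4:ℕ):ℤ) from rfl, zpow_neg, zpow_natCast, ← inv_pow]
  have hne := q2_ne
  field_simp
  ring

lemma qInt2_two_ne : qInt2 2 ≠ 0 := by
  rw [qInt2_two]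
  intro h
  have h2 : q2 * q2 + 1 = 0 := by
    have := congrArg (· * q2) h
    field_simp [q2_ne] at this
    linear_combination this
  have hp : (Polynomial.X * Polynomial.X + 1 : Polynomial ℚ) ≠ 0 := by
    intro hp
    have := congrArg (fun p => Polynomial.coeff p 2) hp
    simp [Polynomial.coeff_one] at this
  have hne : (RatFunc.X * RatFunc.X + 1 : Kq) ≠ 0 := by
    rw [show (RatFunc.X * RatFunc.X + 1 : Kq)
        = algebraMap (Polynomial ℚ) Kq (Polynomial.X * Polynomial.X + 1) by
      push_cast [map_add, map_mul, map_one, RatFunc.algebraMap_X]; ring]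
    exact fun hc => hp ((map_eq_zero_iff _ (IsFractionRing.injective (Polynomial ℚ) Kq)).mp hc)
  exact hne h2

lemma qBinom : qInt2 4 * qInt2 3 / qInt2 2 = (q2^2 + q2⁻¹^2) * (q2^2 + 1 + q2⁻¹^2) := by
  rw [div_eq_iff qInt2_two_ne, qInt2_two, qInt2_three, qInt2_four]
  have hne := q2_ne
  field_simp
  ring

/-- The q-Serre vanishing identity for the scalar coefficient. -/
lemma key : 1 - qInt2 4 * (q2^(-3:ℤ)) + (qInt2 4 * qInt2 3 / qInt2 2) * (q2^(-6:ℤ))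
    - qInt2 4 * (q2^(-9:ℤ)) + (q2^(-12:ℤ)) = 0 := by
  rw [qBinom, qInt2_four]
  simp only [zpow_neg, show (3:ℤ) = ((3:ℕ):ℤ) from rfl, show (6:ℤ) = ((6:ℕ):ℤ) from rfl,
    show (9:ℤ) = ((9:ℕ):ℤ) from rfl, show (12:ℤ) = ((12:ℕ):ℤ) from rfl, zpow_natCast, ← inv_pow]
  have hne := q2_ne
  field_simp
  have hq17 : q2^17 * q2⁻¹^17 = 1 := by
    rw [← mul_pow, mul_inv_cancel₀ q2_ne, one_pow]
  ring

/-- The key identity phrased with powers of t = q₂⁻³. -/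
lemma keyt : 1 - qInt2 4 * (q2^(-3:ℤ)) + (qInt2 4 * qInt2 3 / qInt2 2) * (q2^(-3:ℤ))^2
    - qInt2 4 * (q2^(-3:ℤ))^3 + (q2^(-3:ℤ))^4 = 0 := by
  have h2 : (q2^(-3:ℤ))^2 = q2^(-6:ℤ) := by
    rw [← zpow_natCast (q2^(-3:ℤ)) 2, ← zpow_mul]; norm_num
  have h3 : (q2^(-3:ℤ))^3 = q2^(-9:ℤ) := by
    rw [← zpow_natCast (q2^(-3:ℤ)) 3, ← zpow_mul]; norm_num
  have h4 : (q2^(-3:ℤ))^4 = q2^(-12:ℤ) := by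
    rw [← zpow_natCast (q2^(-3:ℤ)) 4, ← zpow_mul]; norm_num
  rw [h2, h3, h4]; exact key

/-! ### Coefficient-extraction helpers -/

section helpers
variable {R : Type*} [CommRing R]
open Polynomial

lemma cm (p : R[X]) (a b : R) (n : ℕ) :
    (p * (C a * X + C b)).coeff (n+1) = p.coeff n * a + p.coeff (n+1) * b := by
  rw [mul_add, Polynomial.coeff_add,
    show p * (C a * X) = (p * C a) * X by ring,
    Polynomial.coeff_mul_X, Polynomial.coeff_mul_C, Polynomial.coeff_mul_C]

lemma cm4 (p : R[X]) (a b : R) :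
    (p * (C a * X + C b)).coeff 4 = p.coeff 3 * a + p.coeff 4 * b := cm p a b 3
lemma cm3 (p : R[X]) (a b : R) :
    (p * (C a * X + C b)).coeff 3 = p.coeff 2 * a + p.coeff 3 * b := cm p a b 2
lemma cm2 (p : R[X]) (a b : R) :
    (p * (C a * X + C b)).coeff 2 = p.coeff 1 * a + p.coeff 2 * b := cm p a b 1
lemma cm1 (p : R[X]) (a b : R) :
    (p * (C a * X + C b)).coeff 1 = p.coeff 0 * a + p.coeff 1 * b := cm p a b 0

lemma base0 (a b : R) : (C a * X + C b).coeff 0 = b := by simp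
lemma base1 (a b : R) : (C a * X + C b).coeff 1 = a := by simp
lemma base2 (a b : R) : (C a * X + C b).coeff 2 = 0 := by simp [Polynomial.coeff_C]
lemma base3 (a b : R) : (C a * X + C b).coeff 3 = 0 := by simp [Polynomial.coeff_C]
lemma base4 (a b : R) : (C a * X + C b).coeff 4 = 0 := by simp [Polynomial.coeff_C]

lemma cx0 : (X : R[X]).coeff 0 = 0 := by simp
lemma cx1 : (X : R[X]).coeff 1 = 1 := by simp
lemma cx2 : (X : R[X]).coeff 2 = 0 := by simp [Polynomial.coeff_X]
lemma cx3 : (X : R[X]).coeff 3 = 0 := by simp [Polynomial.coeff_X]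
lemma cx4 : (X : R[X]).coeff 4 = 0 := by simp [Polynomial.coeff_X]
lemma cc0 (a : R) : (C a).coeff 0 = a := by simp
lemma cc1 (a : R) : (C a).coeff 1 = 0 := by simp [Polynomial.coeff_C]
lemma cc2 (a : R) : (C a).coeff 2 = 0 := by simp [Polynomial.coeff_C]
lemma cc3 (a : R) : (C a).coeff 3 = 0 := by simp [Polynomial.coeff_C]
lemma cc4 (a : R) : (C a).coeff 4 = 0 := by simp [Polynomial.coeff_C]
end helpers

/-- The canonical scalar u = q₂⁻³ inside the mv-polynomial ring. -/
def u : MvPolynomial (Fin 4) Kq := MvPolynomial.C (q2 ^ (-3:ℤ))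

lemma hf (i : Fin 4) : z i - qinv * w
    = Polynomial.C (-u) * Polynomial.X + Polynomial.C (MvPolynomial.X i) := by
  simp only [z, qinv, w, cK, u, map_neg]
  ring

lemma hg (i : Fin 4) : w - qinv * z i
    = Polynomial.C (1 : MvPolynomial (Fin 4) Kq) * Polynomial.X
      + Polynomial.C (-(u * MvPolynomial.X i)) := by
  simp only [z, qinv, w, cK, u, map_neg, map_mul, map_one]
  ring

/-- The C-image of the key identity. -/
lemma hK : (1 : MvPolynomial (Fin 4) Kq)
    - MvPolynomial.C (qInt2 4) * u
    + MvPolynomial.C (qInt2 4 * qInt2 3 / qInt2 2) * u^2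
    - MvPolynomial.C (qInt2 4) * u^3
    + u^4 = 0 := by
  have := congrArg (MvPolynomial.C (σ := Fin 4) (R := Kq)) keyt
  simpa only [u, map_add, map_sub, map_mul, map_one, map_pow, map_zero] using this

lemma coeff4_serre : serreTerm.coeff 4 = 0 := by
  rw [serreTerm, hf 0, hf 1, hf 2, hf 3, hg 0, hg 1, hg 2, hg 3]
  simp only [Polynomial.coeff_add, cK, Polynomial.coeff_C_mul,
    cm4, cm3, cm2, cm1, base0, base1, base2, base3, base4,
    cx0, cx1, cx2, cx3, cx4, cc0, cc1, cc2, cc3, cc4]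
  linear_combination hK

lemma coeff0_serre : serreTerm.coeff 0 = 0 := by
  rw [serreTerm, hf 0, hf 1, hf 2, hf 3, hg 0, hg 1, hg 2, hg 3]
  simp only [Polynomial.coeff_add, cK, Polynomial.coeff_C_mul,
    Polynomial.mul_coeff_zero, base0,
    cx0, cx1, cx2, cx3, cx4, cc0, cc1, cc2, cc3, cc4]
  linear_combination (MvPolynomial.X 0 * MvPolynomial.X 1 * MvPolynomial.X 2
    * MvPolynomial.X 3 : MvPolynomial (Fin 4) Kq) * hK

/-- In the symmetrized sum Σ_{σ∈S₄} σ[ … ] of the five-term Serre expression, the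
coefficients of w⁰ and w⁴ both vanish. -/
theorem serre_extreme_coefficients_vanish :
    Polynomial.coeff (∑ σ : Equiv.Perm (Fin 4), permAct σ serreTerm) 0 = 0 ∧
    Polynomial.coeff (∑ σ : Equiv.Perm (Fin 4), permAct σ serreTerm) 4 = 0 := by
  constructor <;>
  · rw [Polynomial.finset_sum_coeff]
    refine Finset.sum_eq_zero fun σ _ => ?_
    rw [permAct, Polynomial.coeff_map]
    first
      | rw [coeff0_serre, map_zero]
      | rw [coeff4_serre, map_zero]
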